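/- For each fixed v ∈ ℝⁿ, the function u ↦ h(u, v) attains its minimum over ℝⁿ at the unique point u given coordinatewise by uᵢ = (ητ/(η+τ))·(log aᵢ − log(Σⱼ exp((vⱼ − Cᵢⱼ)/η))); equivalently, u minimizes h(·, v) if and only if exp(uᵢ/η)·Σⱼ exp((vⱼ − Cᵢⱼ)/η) = exp(−uᵢ/τ)·aᵢ for every i. -/

import Mathlib

private lemma exp_ge' (x y : ℝ) : Real.exp y * (x - y + 1) ≤ Real.exp x := by
  have h := mul_le_mul_of_nonneg_left (Real.add_one_le_exp (x - y)) (Real.exp_pos y).le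
  calc Real.exp y * (x - y + 1) ≤ Real.exp y * Real.exp (x - y) := h
    _ = Real.exp x := by rw [← Real.exp_add]; ring_nf

private lemma exp_gt' {x y : ℝ} (h : x ≠ y) : Real.exp y * (x - y + 1) < Real.exp x := by
  have h1 : x - y ≠ 0 := sub_ne_zero.mpr h
  have h2 := mul_lt_mul_of_pos_left (Real.add_one_lt_exp h1) (Real.exp_pos y)
  calc Real.exp y * (x - y + 1) < Real.exp y * Real.exp (x - y) := h2
    _ = Real.exp x := by rw [← Real.exp_add]; ring_nf

private lemma glower {S a τ η : ℝ} (hS : 0 < S) (ha : 0 < a) (hτ : 0 < τ) (hη : 0 < η)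
    {t0 : ℝ} (hcrit : Real.exp (t0 / η) * S = Real.exp (-t0 / τ) * a) (t : ℝ) :
    η * S * Real.exp (t0 / η) + τ * (a * Real.exp (-t0 / τ))
      ≤ η * S * Real.exp (t / η) + τ * (a * Real.exp (-t / τ)) := by
  have key1 : η * S * Real.exp (t0 / η) + (Real.exp (t0 / η) * S) * (t - t0)
      ≤ η * S * Real.exp (t / η) := by
    have h := mul_le_mul_of_nonneg_left (exp_ge' (t / η) (t0 / η)) (mul_pos hη hS).le
    calc η * S * Real.exp (t0 / η) + (Real.exp (t0 / η) * S) * (t - t0)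
        = η * S * (Real.exp (t0 / η) * (t / η - t0 / η + 1)) := by field_simp; ring
      _ ≤ η * S * Real.exp (t / η) := h
  have key2 : τ * (a * Real.exp (-t0 / τ)) + (Real.exp (-t0 / τ) * a) * (t0 - t)
      ≤ τ * (a * Real.exp (-t / τ)) := by
    have h := mul_le_mul_of_nonneg_left (exp_ge' (-t / τ) (-t0 / τ)) (mul_pos hτ ha).le
    calc τ * (a * Real.exp (-t0 / τ)) + (Real.exp (-t0 / τ) * a) * (t0 - t)
        = τ * a * (Real.exp (-t0 / τ) * (-t / τ - -t0 / τ + 1)) := by field_simp; ring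
      _ ≤ τ * a * Real.exp (-t / τ) := h
      _ = τ * (a * Real.exp (-t / τ)) := by ring
  have hz : (Real.exp (t0 / η) * S) * (t - t0) + (Real.exp (-t0 / τ) * a) * (t0 - t) = 0 := by
    rw [hcrit]; ring
  linarith

private lemma glower_strict {S a τ η : ℝ} (hS : 0 < S) (ha : 0 < a) (hτ : 0 < τ) (hη : 0 < η)
    {t0 : ℝ} (hcrit : Real.exp (t0 / η) * S = Real.exp (-t0 / τ) * a) {t : ℝ} (hne : t ≠ t0) :
    η * S * Real.exp (t0 / η) + τ * (a * Real.exp (-t0 / τ))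
      < η * S * Real.exp (t / η) + τ * (a * Real.exp (-t / τ)) := by
  have hne' : t / η ≠ t0 / η := fun h => hne (by field_simp at h; exact h)
  have key1 : η * S * Real.exp (t0 / η) + (Real.exp (t0 / η) * S) * (t - t0)
      < η * S * Real.exp (t / η) := by
    have h := mul_lt_mul_of_pos_left (exp_gt' hne') (mul_pos hη hS)
    calc η * S * Real.exp (t0 / η) + (Real.exp (t0 / η) * S) * (t - t0)
        = η * S * (Real.exp (t0 / η) * (t / η - t0 / η + 1)) := by field_simp; ring
      _ < η * S * Real.exp (t / η) := h
  have key2 : τ * (a * Real.exp (-t0 / τ)) + (Real.exp (-t0 / τ) * a) * (t0 - t)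
      ≤ τ * (a * Real.exp (-t / τ)) := by
    have h := mul_le_mul_of_nonneg_left (exp_ge' (-t / τ) (-t0 / τ)) (mul_pos hτ ha).le
    calc τ * (a * Real.exp (-t0 / τ)) + (Real.exp (-t0 / τ) * a) * (t0 - t)
        = τ * a * (Real.exp (-t0 / τ) * (-t / τ - -t0 / τ + 1)) := by field_simp; ring
      _ ≤ τ * a * Real.exp (-t / τ) := h
      _ = τ * (a * Real.exp (-t / τ)) := by ring
  have hz : (Real.exp (t0 / η) * S) * (t - t0) + (Real.exp (-t0 / τ) * a) * (t0 - t) = 0 := by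
    rw [hcrit]; ring
  linarith

private lemma crit_at {S a τ η : ℝ} (hS : 0 < S) (ha : 0 < a) (hτ : 0 < τ) (hη : 0 < η) :
    Real.exp ((η * τ / (η + τ)) * (Real.log a - Real.log S) / η) * S
      = Real.exp (-((η * τ / (η + τ)) * (Real.log a - Real.log S)) / τ) * a := by
  obtain ⟨x, rfl⟩ : ∃ x, a = Real.exp x := ⟨Real.log a, (Real.exp_log ha).symm⟩
  obtain ⟨y, rfl⟩ : ∃ y, S = Real.exp y := ⟨Real.log S, (Real.exp_log hS).symm⟩
  rw [Real.log_exp, Real.log_exp, ← Real.exp_add, ← Real.exp_add]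
  congr 1
  have hητ : η + τ ≠ 0 := by positivity
  field_simp
  ring

private lemma crit_unique {S a τ η t : ℝ} (hS : 0 < S) (ha : 0 < a) (hτ : 0 < τ) (hη : 0 < η)
    (h : Real.exp (t / η) * S = Real.exp (-t / τ) * a) :
    t = (η * τ / (η + τ)) * (Real.log a - Real.log S) := by
  have h' : t / η + Real.log S = -t / τ + Real.log a := by
    have : Real.exp (t / η + Real.log S) = Real.exp (-t / τ + Real.log a) := by
      rw [Real.exp_add, Real.exp_add, Real.exp_log hS, Real.exp_log ha, h]
    exact Real.exp_injective this
  have hητ : η + τ ≠ 0 := by positivity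
  field_simp at h' ⊢
  nlinarith [h']

/-- The dual entropic regularized UOT objective. -/
noncomputable def dualUOT {n : ℕ} (a b : Fin n → ℝ) (C : Fin n → Fin n → ℝ)
    (τ η : ℝ) (u v : Fin n → ℝ) : ℝ :=
  η * ∑ i, ∑ j, Real.exp ((u i + v j - C i j) / η)
    + τ * ∑ i, a i * Real.exp (-(u i) / τ)
    + τ * ∑ j, b j * Real.exp (-(v j) / τ)

private lemma dual_eq {n : ℕ} (a b : Fin n → ℝ) (C : Fin n → Fin n → ℝ)
    (τ η : ℝ) (hη : 0 < η) (u v : Fin n → ℝ) :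
    dualUOT a b C τ η u v =
      (∑ i, (η * (∑ j, Real.exp ((v j - C i j) / η)) * Real.exp (u i / η)
        + τ * (a i * Real.exp (-(u i) / τ))))
      + τ * ∑ j, b j * Real.exp (-(v j) / τ) := by
  unfold dualUOT
  have hexp : ∀ i j, Real.exp ((u i + v j - C i j) / η)
      = Real.exp ((v j - C i j) / η) * Real.exp (u i / η) := by
    intro i j
    rw [← Real.exp_add]
    congr 1
    field_simp
    ring
  simp only [hexp, ← Finset.sum_mul, mul_assoc]
  rw [Finset.sum_add_distrib, ← Finset.mul_sum, ← Finset.mul_sum]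

/-- For fixed `v`, `u ↦ h(u,v)` attains its minimum at the unique point
`uᵢ = (ητ/(η+τ))·(log aᵢ − log Σⱼ exp((vⱼ − Cᵢⱼ)/η))`; equivalently, `u` minimizes
`h(·,v)` iff `exp(uᵢ/η)·Σⱼ exp((vⱼ − Cᵢⱼ)/η) = exp(−uᵢ/τ)·aᵢ` for every `i`. -/
theorem stmt_1 {n : ℕ} (hn : 2 ≤ n) (a b : Fin n → ℝ)
    (ha : ∀ i, 0 < a i) (hb : ∀ j, 0 < b j)
    (C : Fin n → Fin n → ℝ) (hC : ∀ i j, 0 ≤ C i j)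
    (τ η : ℝ) (hτ : 0 < τ) (hη : 0 < η) (v : Fin n → ℝ) :
    (∀ u : Fin n → ℝ,
      dualUOT a b C τ η
        (fun i => (η * τ / (η + τ)) *
          (Real.log (a i) - Real.log (∑ j, Real.exp ((v j - C i j) / η)))) v
        ≤ dualUOT a b C τ η u v) ∧
    (∀ u : Fin n → ℝ,
      (∀ u' : Fin n → ℝ, dualUOT a b C τ η u v ≤ dualUOT a b C τ η u' v) ↔
        (∀ i, Real.exp (u i / η) * (∑ j, Real.exp ((v j - C i j) / η))
          = Real.exp (-(u i) / τ) * a i)) ∧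
    (∀ u : Fin n → ℝ,
      (∀ i, Real.exp (u i / η) * (∑ j, Real.exp ((v j - C i j) / η))
          = Real.exp (-(u i) / τ) * a i) →
        u = fun i => (η * τ / (η + τ)) *
          (Real.log (a i) - Real.log (∑ j, Real.exp ((v j - C i j) / η)))) := by
  have hne : Nonempty (Fin n) := ⟨⟨0, by omega⟩⟩
  set S : Fin n → ℝ := fun i => ∑ j, Real.exp ((v j - C i j) / η) with hSdef
  have hS : ∀ i, 0 < S i := fun i =>
    Finset.sum_pos (fun j _ => Real.exp_pos _) Finset.univ_nonempty
  set ustar : Fin n → ℝ := fun i => (η * τ / (η + τ)) * (Real.log (a i) - Real.log (S i))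
    with hustar
  have hcritstar : ∀ i, Real.exp (ustar i / η) * S i = Real.exp (-(ustar i) / τ) * a i :=
    fun i => crit_at (hS i) (ha i) hτ hη
  -- generic: critical implies global min
  have min_of_crit : ∀ u : Fin n → ℝ,
      (∀ i, Real.exp (u i / η) * S i = Real.exp (-(u i) / τ) * a i) →
      ∀ u' : Fin n → ℝ, dualUOT a b C τ η u v ≤ dualUOT a b C τ η u' v := by
    intro u hcrit u'
    rw [dual_eq a b C τ η hη, dual_eq a b C τ η hη]
    refine add_le_add ?_ le_rfl
    apply Finset.sum_le_sum
    intro i _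
    exact glower (hS i) (ha i) hτ hη (hcrit i) (u' i)
  have part1 := min_of_crit ustar hcritstar
  refine ⟨part1, ?_, ?_⟩
  · intro u
    constructor
    · intro hmin
      have hu : u = ustar := by
        by_contra hneq
        obtain ⟨i0, hi0⟩ : ∃ i, u i ≠ ustar i := by
          by_contra h; push_neg at h; exact hneq (funext h)
        have hlt : dualUOT a b C τ η ustar v < dualUOT a b C τ η u v := by
          rw [dual_eq a b C τ η hη, dual_eq a b C τ η hη]
          refine add_lt_add_of_lt_of_le ?_ le_rfl
          refine Finset.sum_lt_sum
            (fun i _ => glower (hS i) (ha i) hτ hη (hcritstar i) (u i))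
            ⟨i0, Finset.mem_univ _,
              glower_strict (hS i0) (ha i0) hτ hη (hcritstar i0) hi0⟩
        exact absurd (hmin ustar) (not_le.mpr hlt)
      rw [hu]
      exact hcritstar
    · exact min_of_crit u
  · intro u hcrit
    funext i
    exact crit_unique (hS i) (ha i) hτ hη (hcrit i)
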